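/- arXiv:2007.15530 — 3 statements merged into one kernel-verified Lean document; each statement's English description precedes it below -/
import Mathlib

section
/- For a > 0, the family φ_a(t) = 2 sin(3at/2) sin(at/2)/(π a t²) satisfies ‖φ_a‖₁ ≤ 2^{3/2}·3^{-1/4}, a bound independent of a. -/
open MeasureTheory Set Real

/-- `φ_a(t) = 2 sin(3at/2) sin(at/2)/(π a t²)`, extended continuously at `t = 0`. -/
noncomputable def phia (a t : ℝ) : ℝ :=
  if t = 0 then 3 * a / (2 * Real.pi)
  else 2 * Real.sin (3 * a * t / 2) * Real.sin (a * t / 2) / (Real.pi * a * t ^ 2)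

noncomputable def Gfn : ℝ → ℝ := fun u =>
  if u ≤ 1 then 3 / (2 * Real.pi)
  else if u ≤ 4/3 then 1 / Real.pi
  else if u ≤ 2 then 3 / (4 * Real.pi)
  else 2 / (Real.pi * u ^ 2)

lemma Gfn_nonneg (u : ℝ) : 0 ≤ Gfn u := by
  unfold Gfn
  have := Real.pi_pos
  split_ifs <;> positivity

lemma Gfn_meas : Measurable Gfn := by
  unfold Gfn
  apply Measurable.ite (measurableSet_le measurable_id measurable_const) measurable_const
  apply Measurable.ite (measurableSet_le measurable_id measurable_const) measurable_const
  apply Measurable.ite (measurableSet_le measurable_id measurable_const) measurable_const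
  exact (measurable_const.div ((measurable_const.mul (measurable_id.pow_const 2))))

lemma GIoi2 : IntegrableOn Gfn (Ioi 2) ∧ ∫ u in Ioi (2:ℝ), Gfn u = 1 / Real.pi := by
  have hpi := Real.pi_pos
  have hcongr : EqOn Gfn (fun u : ℝ => (2 / Real.pi) * u ^ (-2 : ℝ)) (Ioi 2) := by
    intro u hu
    simp only [mem_Ioi] at hu
    have hu0 : (0:ℝ) < u := by linarith
    unfold Gfn
    rw [if_neg (by linarith), if_neg (by linarith), if_neg (by linarith)]
    have : u ^ (-2 : ℝ) = (u ^ 2)⁻¹ := by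
      rw [Real.rpow_neg hu0.le]
      norm_num [Real.rpow_natCast u 2]
    show 2 / (Real.pi * u ^ 2) = 2 / Real.pi * u ^ (-2 : ℝ)
    rw [this]
    field_simp
  have hig : IntegrableOn (fun u : ℝ => (2 / Real.pi) * u ^ (-2 : ℝ)) (Ioi 2) :=
    (integrableOn_Ioi_rpow_of_lt (by norm_num) (by norm_num)).const_mul _
  constructor
  · exact hig.congr_fun (fun u hu => (hcongr hu).symm) measurableSet_Ioi
  · rw [setIntegral_congr_fun measurableSet_Ioi hcongr, MeasureTheory.integral_const_mul,
      integral_Ioi_rpow_of_lt (by norm_num) (by norm_num)]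
    norm_num [Real.rpow_neg_one]

lemma Gconst {a b c : ℝ} (hab : a ≤ b) (h : EqOn Gfn (fun _ => c) (Ioc a b)) :
    IntegrableOn Gfn (Ioc a b) ∧ ∫ u in Ioc a b, Gfn u = (b - a) * c := by
  constructor
  · exact (integrableOn_const (C := c) measure_Ioc_lt_top.ne).congr_fun
      (fun u hu => (h hu).symm) measurableSet_Ioc
  · rw [setIntegral_congr_fun measurableSet_Ioc h, setIntegral_const, Real.volume_real_Ioc_of_le hab,
      smul_eq_mul]

lemma G1 : IntegrableOn Gfn (Ioc 0 1) ∧ ∫ u in Ioc (0:ℝ) 1, Gfn u = 3 / (2 * Real.pi) := by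
  have := Gconst (a := 0) (b := 1) (c := 3 / (2 * Real.pi)) (by norm_num) (by
    intro u hu; simp only [mem_Ioc] at hu; unfold Gfn; rw [if_pos hu.2])
  simpa using this

lemma G2 : IntegrableOn Gfn (Ioc 1 (4/3)) ∧
    ∫ u in Ioc (1:ℝ) (4/3), Gfn u = (1/3) * (1 / Real.pi) := by
  have := Gconst (a := 1) (b := 4/3) (c := 1 / Real.pi) (by norm_num) (by
    intro u hu; simp only [mem_Ioc] at hu; unfold Gfn
    rw [if_neg (by linarith [hu.1]), if_pos hu.2])
  constructor
  · exact this.1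
  · rw [this.2]; norm_num

lemma G3 : IntegrableOn Gfn (Ioc (4/3) 2) ∧
    ∫ u in Ioc (4/3:ℝ) 2, Gfn u = (2/3) * (3 / (4 * Real.pi)) := by
  have := Gconst (a := 4/3) (b := 2) (c := 3 / (4 * Real.pi)) (by norm_num) (by
    intro u hu; simp only [mem_Ioc] at hu; unfold Gfn
    rw [if_neg (by linarith [hu.1]), if_neg (by linarith [hu.1]), if_pos hu.2])
  constructor
  · exact this.1
  · rw [this.2]; norm_num

lemma disj_Ioc_Ioc {a b c : ℝ} : Disjoint (Ioc a b) (Ioc b c) := by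
  rw [Set.disjoint_left]
  rintro x ⟨_, h2⟩ ⟨h3, _⟩
  exact absurd h3 (not_lt.2 h2)

lemma disj_Ioc_Ioi {a b : ℝ} : Disjoint (Ioc a b) (Ioi b) := by
  rw [Set.disjoint_left]
  rintro x ⟨_, h2⟩ h3
  exact absurd h3 (not_lt.2 h2)

lemma GIoi0 : IntegrableOn Gfn (Ioi 0) ∧
    ∫ u in Ioi (0:ℝ), Gfn u = 10 / (3 * Real.pi) := by
  have h23 : Ioc (1:ℝ) (4/3) ∪ Ioc (4/3:ℝ) 2 = Ioc (1:ℝ) 2 :=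
    Set.Ioc_union_Ioc_eq_Ioc (by norm_num) (by norm_num)
  have h123 : Ioc (0:ℝ) 1 ∪ Ioc (1:ℝ) 2 = Ioc (0:ℝ) 2 :=
    Set.Ioc_union_Ioc_eq_Ioc (by norm_num) (by norm_num)
  have hall : Ioc (0:ℝ) 2 ∪ Ioi (2:ℝ) = Ioi (0:ℝ) :=
    Set.Ioc_union_Ioi_eq_Ioi (by norm_num)
  have i23 : IntegrableOn Gfn (Ioc (1:ℝ) 2) := by
    rw [← h23]; exact G2.1.union G3.1
  have e23 : ∫ u in Ioc (1:ℝ) 2, Gfn u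
      = (1/3) * (1 / Real.pi) + (2/3) * (3 / (4 * Real.pi)) := by
    rw [← h23, setIntegral_union disj_Ioc_Ioc measurableSet_Ioc G2.1 G3.1, G2.2, G3.2]
  have i123 : IntegrableOn Gfn (Ioc (0:ℝ) 2) := by
    rw [← h123]; exact G1.1.union i23
  have e123 : ∫ u in Ioc (0:ℝ) 2, Gfn u
      = 3 / (2 * Real.pi) + ((1/3) * (1 / Real.pi) + (2/3) * (3 / (4 * Real.pi))) := by
    rw [← h123, setIntegral_union disj_Ioc_Ioc measurableSet_Ioc G1.1 i23, G1.2, e23]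
  constructor
  · rw [← hall]; exact i123.union GIoi2.1
  · rw [← hall, setIntegral_union disj_Ioc_Ioi measurableSet_Ioi i123 GIoi2.1, e123, GIoi2.2]
    have hpi := Real.pi_pos
    field_simp
    ring

lemma Gabs_int : Integrable (fun t : ℝ => Gfn |t|) := by
  have hIoi : IntegrableOn (fun t : ℝ => Gfn |t|) (Ioi 0) :=
    GIoi0.1.congr_fun (fun u hu => by
      rw [abs_of_pos (mem_Ioi.mp hu)]) measurableSet_Ioi
  have hIic : IntegrableOn (fun t : ℝ => Gfn |t|) (Iic 0) := by
    rw [← Measure.map_neg_eq_self (volume : Measure ℝ)]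
    have m : MeasurableEmbedding fun x : ℝ => -x := (Homeomorph.neg ℝ).measurableEmbedding
    rw [m.integrableOn_map_iff]
    simp_rw [Function.comp_def, abs_neg, neg_preimage, neg_Iic, neg_zero]
    exact Iff.mpr integrableOn_Ici_iff_integrableOn_Ioi hIoi
  have := hIic.union hIoi
  rwa [Set.Iic_union_Ioi, integrableOn_univ] at this

lemma Gabs_integral : ∫ t : ℝ, Gfn |t| = 20 / (3 * Real.pi) := by
  rw [integral_comp_abs (f := Gfn), GIoi0.2]
  ring

lemma phia_one_bound (t : ℝ) : |phia 1 t| ≤ Gfn |t| := by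
  have hpi := Real.pi_pos
  unfold phia Gfn
  rcases eq_or_ne t 0 with rfl | ht
  · simp
    exact le_of_eq (abs_of_nonneg (by positivity))
  · rw [if_neg ht]
    have ht2 : (0:ℝ) < t ^ 2 := by positivity
    have habs : |2 * Real.sin (3 * 1 * t / 2) * Real.sin (1 * t / 2) / (Real.pi * 1 * t ^ 2)|
        = 2 * |Real.sin (3 * t / 2)| * |Real.sin (t / 2)| / (Real.pi * t ^ 2) := by
      rw [abs_div, abs_mul, abs_mul]
      rw [abs_of_nonneg (by positivity : (0:ℝ) ≤ Real.pi * 1 * t ^ 2)]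
      norm_num
    rw [habs]
    have hs1 : |Real.sin (3 * t / 2)| ≤ 1 := Real.abs_sin_le_one _
    have hs1' : |Real.sin (3 * t / 2)| ≤ 3 * |t| / 2 := by
      have := Real.abs_sin_le_abs (x := 3 * t / 2)
      calc |Real.sin (3 * t / 2)| ≤ |3 * t / 2| := this
        _ = 3 * |t| / 2 := by rw [abs_div, abs_mul]; norm_num
    have hs2 : |Real.sin (t / 2)| ≤ |t| / 2 := by
      have := Real.abs_sin_le_abs (x := t / 2)
      calc |Real.sin (t / 2)| ≤ |t / 2| := this
        _ = |t| / 2 := by rw [abs_div]; norm_num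
    have hs2' : |Real.sin (t / 2)| ≤ 1 := Real.abs_sin_le_one _
    have habs0 : 0 < |t| := abs_pos.mpr ht
    have ht2e : t ^ 2 = |t| ^ 2 := (sq_abs t).symm
    split_ifs with h1 h2 h3
    · -- |t| ≤ 1 : bound 3/(2π)
      rw [div_le_div_iff₀ (by positivity) (by positivity)]
      calc 2 * |Real.sin (3 * t / 2)| * |Real.sin (t / 2)| * (2 * Real.pi)
          ≤ 2 * (3 * |t| / 2) * (|t| / 2) * (2 * Real.pi) := by
            apply mul_le_mul_of_nonneg_right _ (by positivity)
            apply mul_le_mul (mul_le_mul_of_nonneg_left hs1' (by norm_num)) hs2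
              (abs_nonneg _) (by positivity)
        _ = 3 * (Real.pi * t ^ 2) := by rw [ht2e]; ring
    · -- 1 < |t| ≤ 4/3 : bound 1/π ; use sin ≤ 1 and sin ≤ |t|/2
      rw [div_le_div_iff₀ (by positivity) (by positivity)]
      calc 2 * |Real.sin (3 * t / 2)| * |Real.sin (t / 2)| * Real.pi
          ≤ 2 * 1 * (|t| / 2) * Real.pi := by
            apply mul_le_mul_of_nonneg_right _ (by positivity)
            apply mul_le_mul (mul_le_mul_of_nonneg_left hs1 (by norm_num)) hs2
              (abs_nonneg _) (by norm_num)
        _ = |t| * Real.pi := by ring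
        _ ≤ 1 * (Real.pi * t ^ 2) := by
            rw [ht2e]
            have := mul_nonneg (mul_nonneg hpi.le habs0.le)
              (sub_nonneg.2 (not_le.1 h1).le)
            nlinarith [this]
    · -- 4/3 < |t| ≤ 2 : bound 3/(4π)
      rw [div_le_div_iff₀ (by positivity) (by positivity)]
      calc 2 * |Real.sin (3 * t / 2)| * |Real.sin (t / 2)| * (4 * Real.pi)
          ≤ 2 * 1 * (|t| / 2) * (4 * Real.pi) := by
            apply mul_le_mul_of_nonneg_right _ (by positivity)
            apply mul_le_mul (mul_le_mul_of_nonneg_left hs1 (by norm_num)) hs2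
              (abs_nonneg _) (by norm_num)
        _ = 4 * |t| * Real.pi := by ring
        _ ≤ 3 * (Real.pi * t ^ 2) := by
            rw [ht2e]
            have h2' : (0:ℝ) ≤ 3 * |t| - 4 := by
              have := (not_le.1 h2).le
              linarith
            have := mul_nonneg (mul_nonneg hpi.le habs0.le) h2'
            nlinarith [this]
    · -- |t| > 2 : bound 2/(π t²)
      rw [sq_abs]
      have hnum : 2 * |Real.sin (3 * t / 2)| * |Real.sin (t / 2)| ≤ 2 := by
        nlinarith [abs_nonneg (Real.sin (3 * t / 2)), abs_nonneg (Real.sin (t / 2))]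
      exact (div_le_div_iff_of_pos_right (by positivity : (0:ℝ) < Real.pi * t ^ 2)).mpr hnum

lemma phia_meas (a : ℝ) : Measurable (phia a) := by
  unfold phia
  refine Measurable.ite (by simp [MeasurableSet.singleton]) measurable_const ?_
  apply Measurable.div
  · fun_prop
  · fun_prop

lemma phia_one_int : Integrable (phia 1) := by
  refine Gabs_int.mono ((phia_meas 1).aestronglyMeasurable) ?_
  filter_upwards with t
  rw [Real.norm_eq_abs, Real.norm_eq_abs, abs_of_nonneg (Gfn_nonneg _)]
  exact phia_one_bound t

lemma phia_scale (a : ℝ) (ha : 0 < a) : phia a = fun t => a * phia 1 (a * t) := by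
  funext t
  unfold phia
  rcases eq_or_ne t 0 with rfl | ht
  · simp
    ring
  · have hat : a * t ≠ 0 := mul_ne_zero ha.ne' ht
    rw [if_neg ht, if_neg hat]
    have h1 : 3 * 1 * (a * t) / 2 = 3 * a * t / 2 := by ring
    have h2 : 1 * (a * t) / 2 = a * t / 2 := by ring
    rw [h1, h2]
    field_simp

lemma phia_int (a : ℝ) (ha : 0 < a) : Integrable (phia a) := by
  rw [phia_scale a ha]
  exact (phia_one_int.comp_mul_left' ha.ne').const_mul a

lemma phia_l1 (a : ℝ) (ha : 0 < a) : ∫ t, ‖phia a t‖ = ∫ t, ‖phia 1 t‖ := by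
  rw [phia_scale a ha]
  have : (fun t => ‖a * phia 1 (a * t)‖) = fun t => a * ‖phia 1 (a * t)‖ := by
    funext t
    rw [norm_mul, Real.norm_eq_abs a, abs_of_pos ha]
  simp only [this]
  rw [MeasureTheory.integral_const_mul]
  rw [MeasureTheory.Measure.integral_comp_mul_left (fun u => ‖phia 1 u‖) a]
  rw [smul_eq_mul, abs_of_pos (inv_pos.2 ha)]
  field_simp

lemma numeric : 20 / (3 * Real.pi) ≤ (2 : ℝ) ^ ((3 : ℝ) / 2) * (3 : ℝ) ^ (-(1 : ℝ) / 4) := by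
  have hpi := Real.pi_gt_d6
  have h1 : 20 / (3 * Real.pi) ≤ 107 / 50 := by
    rw [div_le_div_iff₀ (by positivity) (by norm_num)]
    nlinarith
  refine h1.trans ?_
  set C := (2 : ℝ) ^ ((3 : ℝ) / 2) * (3 : ℝ) ^ (-(1 : ℝ) / 4) with hC
  have hCpos : 0 < C := by positivity
  have hC4 : C ^ (4:ℕ) = 64 / 3 := by
    rw [hC, mul_pow, ← Real.rpow_natCast ((2:ℝ) ^ ((3:ℝ)/2)) 4,
      ← Real.rpow_natCast ((3:ℝ) ^ (-(1:ℝ)/4)) 4,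
      ← Real.rpow_mul (by norm_num : (0:ℝ) ≤ 2),
      ← Real.rpow_mul (by norm_num : (0:ℝ) ≤ 3)]
    rw [show ((3:ℝ)/2 * ((4:ℕ):ℝ)) = (6:ℝ) by norm_num,
      show (-(1:ℝ)/4 * ((4:ℕ):ℝ)) = (-1:ℝ) by norm_num]
    rw [show (6:ℝ) = ((6:ℕ):ℝ) by norm_num, Real.rpow_natCast, Real.rpow_neg_one]
    norm_num
  have : (107/50 : ℝ) ^ (4:ℕ) ≤ C ^ (4:ℕ) := by
    rw [hC4]; norm_num
  exact le_of_pow_le_pow_left₀ (by norm_num) hCpos.le this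

/-- `‖φ_a‖₁ ≤ 2^{3/2}·3^{-1/4}`, uniformly in `a`. -/
theorem stmt4 (a : ℝ) (ha : 0 < a) :
    eLpNorm (phia a) 1 volume ≤
      ENNReal.ofReal ((2 : ℝ) ^ ((3 : ℝ) / 2) * (3 : ℝ) ^ (-(1 : ℝ) / 4)) := by
  have hint := phia_int a ha
  rw [eLpNorm_one_eq_lintegral_enorm,
    ← ofReal_integral_norm_eq_lintegral_enorm hint]
  apply ENNReal.ofReal_le_ofReal
  rw [phia_l1 a ha]
  have h1 : ∫ t, ‖phia 1 t‖ ≤ ∫ t : ℝ, Gfn |t| := by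
    apply integral_mono phia_one_int.norm Gabs_int
    intro t
    show ‖phia 1 t‖ ≤ Gfn |t|
    rw [Real.norm_eq_abs]
    exact phia_one_bound t
  rw [Gabs_integral] at h1
  exact h1.trans numeric
end

section
/- Let H = L²(ℝ), v ∈ L²(ℝ), V the operator (Vx)(t) = v(t)x(−t), and h ∈ L¹(ℝ) ∩ L²(ℝ). Define the operator K on H by (Kx)(s) = ∫_ℝ h(t)v(s−t)x(−s+2t)dt. Then K is Hilbert–Schmidt with ‖K‖₂² = (1/2)‖h‖₂²‖v‖₂². -/
open MeasureTheory

noncomputable def Tlin : (ℝ × ℝ) →ₗ[ℝ] (ℝ × ℝ) where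
  toFun p := ((p.1 + p.2) / 2, (p.1 - p.2) / 2)
  map_add' a b := by
    simp only [Prod.fst_add, Prod.snd_add, Prod.mk_add_mk, Prod.mk.injEq]
    constructor <;> ring
  map_smul' c a := by
    simp only [Prod.smul_fst, Prod.smul_snd, smul_eq_mul, Prod.smul_mk, RingHom.id_apply,
      Prod.mk.injEq]
    constructor <;> ring

lemma Tlin_det : LinearMap.det Tlin = -(1/2) := by
  rw [← LinearMap.det_toMatrix (Module.Basis.finTwoProd ℝ), Matrix.det_fin_two]
  simp [LinearMap.toMatrix_apply, Tlin, Module.Basis.finTwoProd_zero, Module.Basis.finTwoProd_one,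
    Module.Basis.coe_finTwoProd_repr]
  norm_num

lemma Tlin_map_volume :
    Measure.map (Tlin : ℝ × ℝ → ℝ × ℝ) (volume : Measure (ℝ × ℝ)) = (2 : ENNReal) • volume := by
  haveI : Measure.IsAddHaarMeasure (volume : Measure (ℝ × ℝ)) :=
    Measure.prod.instIsAddHaarMeasure volume volume
  rw [Measure.map_linearMap_addHaar_eq_smul_addHaar _ (by rw [Tlin_det]; norm_num), Tlin_det]
  norm_num

lemma Tlin_measurable : Measurable (Tlin : ℝ × ℝ → ℝ × ℝ) :=
  Tlin.continuous_of_finiteDimensional.measurable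

/-- Let `v ∈ L²(ℝ)`, `h ∈ L¹ ∩ L²`, and `K` the operator
`(Kx)(s) = ∫ h(t) v(s-t) x(-s+2t) dt` on `L²(ℝ)`. Then `K` is the integral (Hilbert–Schmidt)
operator with kernel `k(s,u) = (1/2) h((s+u)/2) v((s-u)/2)`, whose `L²(ℝ²)` (Hilbert–Schmidt)
squared norm equals `(1/2)‖h‖₂²‖v‖₂²`. -/
theorem stmt13 (v h : ℝ → ℂ)
    (hv : MemLp v 2 volume) (hh1 : Integrable h volume) (hh2 : MemLp h 2 volume) :
    (∀ (x : ℝ → ℂ) (s : ℝ),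
        (∫ t : ℝ, h t * v (s - t) * x (-s + 2 * t)) =
          ∫ u : ℝ, ((1 / 2 : ℂ) * h ((s + u) / 2) * v ((s - u) / 2)) * x u) ∧
      Integrable
        (fun p : ℝ × ℝ => ‖(1 / 2 : ℂ) * h ((p.1 + p.2) / 2) * v ((p.1 - p.2) / 2)‖ ^ 2)
        volume ∧
      (∫ p : ℝ × ℝ, ‖(1 / 2 : ℂ) * h ((p.1 + p.2) / 2) * v ((p.1 - p.2) / 2)‖ ^ 2) =
        (1 / 2) * (∫ t : ℝ, ‖h t‖ ^ 2) * (∫ t : ℝ, ‖v t‖ ^ 2) := by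
  -- the product form of the kernel squared norm
  set f : ℝ → ℝ := fun a => (1/4 : ℝ) * ‖h a‖ ^ 2 with hf_def
  set g : ℝ → ℝ := fun b => ‖v b‖ ^ 2 with hg_def
  set G : ℝ × ℝ → ℝ := fun q => f q.1 * g q.2 with hG_def
  have hFG : (fun p : ℝ × ℝ => ‖(1 / 2 : ℂ) * h ((p.1 + p.2) / 2) * v ((p.1 - p.2) / 2)‖ ^ 2)
      = G ∘ (Tlin : ℝ × ℝ → ℝ × ℝ) := by
    funext p
    show ‖(1 / 2 : ℂ) * h ((p.1 + p.2) / 2) * v ((p.1 - p.2) / 2)‖ ^ 2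
      = (1/4 : ℝ) * ‖h ((p.1 + p.2) / 2)‖ ^ 2 * ‖v ((p.1 - p.2) / 2)‖ ^ 2
    rw [norm_mul, norm_mul]
    norm_num
    ring
  have hfi : Integrable f volume := ((hh2.norm.integrable_sq).const_mul _)
  have hgi : Integrable g volume := hv.norm.integrable_sq
  have hGi : Integrable G (volume : Measure (ℝ × ℝ)) := by
    rw [Measure.volume_eq_prod]
    exact hfi.mul_prod hgi
  have hqmp : Measure.QuasiMeasurePreserving (Tlin : ℝ × ℝ → ℝ × ℝ) volume volume :=
    ⟨Tlin_measurable, by rw [Tlin_map_volume]; exact Measure.smul_absolutelyContinuous⟩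
  have hGsm : AEStronglyMeasurable G (Measure.map (Tlin : ℝ × ℝ → ℝ × ℝ) volume) := by
    rw [Tlin_map_volume]
    exact hGi.aestronglyMeasurable.mono_ac Measure.smul_absolutelyContinuous
  refine ⟨?_, ?_, ?_⟩
  · -- change of variables u = -s + 2t
    intro x s
    set k : ℝ → ℂ := fun t => h t * v (s - t) * x (-s + 2 * t) with hk_def
    have h1 : ∀ u : ℝ, ((1 / 2 : ℂ) * h ((s + u) / 2) * v ((s - u) / 2)) * x u
        = (1 / 2 : ℂ) * k ((s + u) / 2) := by
      intro u
      have e1 : s - (s + u) / 2 = (s - u) / 2 := by ring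
      have e2 : -s + 2 * ((s + u) / 2) = u := by ring
      simp only [hk_def, e1, e2]
      ring
    calc (∫ t : ℝ, h t * v (s - t) * x (-s + 2 * t)) = ∫ t : ℝ, k t := rfl
      _ = ∫ u : ℝ, (1 / 2 : ℂ) * k ((s + u) / 2) := by
          have h2 : ∀ u : ℝ, k ((s + u) / 2) = (fun y => k ((1/2 : ℝ) * y)) (u + s) := by
            intro u
            simp only
            congr 1
            ring
          rw [integral_const_mul]
          simp_rw [h2]
          rw [integral_add_right_eq_self (fun y => k ((1/2 : ℝ) * y)) s,
            Measure.integral_comp_mul_left k (1/2 : ℝ)]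
          norm_num
          ring
      _ = ∫ u : ℝ, ((1 / 2 : ℂ) * h ((s + u) / 2) * v ((s - u) / 2)) * x u := by
          simp_rw [h1]
  · rw [hFG]
    have : Integrable G (Measure.map (Tlin : ℝ × ℝ → ℝ × ℝ) volume) := by
      rw [Tlin_map_volume]
      exact hGi.smul_measure (by norm_num)
    exact (integrable_map_measure hGsm Tlin_measurable.aemeasurable).mp this
  · rw [hFG]
    have : (∫ p : ℝ × ℝ, (G ∘ (Tlin : ℝ × ℝ → ℝ × ℝ)) p)
        = ∫ q, G q ∂(Measure.map (Tlin : ℝ × ℝ → ℝ × ℝ) volume) := by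
      rw [integral_map Tlin_measurable.aemeasurable hGsm]
      rfl
    rw [this, Tlin_map_volume, integral_smul_measure]
    rw [Measure.volume_eq_prod, integral_prod_mul f g]
    have : (∫ a, f a) = (1/4 : ℝ) * ∫ t : ℝ, ‖h t‖ ^ 2 := by
      simp only [hf_def]
      rw [integral_const_mul]
    rw [this]
    simp only [hg_def, ENNReal.toReal_ofNat, smul_eq_mul]
    ring
end

section
/- Let v ∈ L²(ℝ), h ∈ L¹(ℝ) ∩ L^∞(ℝ), and define on L²(ℝ) the operator (Mx)(s) = ∫_ℝ v(s)h(t)v(−s−t)x(s+2t)dt. Then M is Hilbert–Schmidt and ‖M‖₂² = (1/2)∫∫|v(s)h(t)v(−s−t)|²ds dt ≤ (1/2)‖h‖_∞²‖v‖₂⁴. -/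
open MeasureTheory
open scoped ENNReal NNReal

lemma int_cov (F : ℝ → ℂ) (s : ℝ) : (∫ t : ℝ, F (s + 2 * t)) = (2⁻¹ : ℝ) • ∫ u, F u := by
  have h1 : (∫ t : ℝ, F (s + 2 * t)) = ∫ t : ℝ, (fun u => F (s + u)) (2 * t) := rfl
  rw [h1, Measure.integral_comp_mul_left (fun u => F (s + u)) 2,
    integral_add_left_eq_self, show |(2:ℝ)⁻¹| = 2⁻¹ by norm_num]

noncomputable def phiH : ℝ × ℝ ≃ₜ ℝ × ℝ :=
  { toFun := fun p => (p.1, p.1 + 2 * p.2)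
    invFun := fun p => (p.1, (p.2 - p.1) / 2)
    left_inv := fun p => by simp [Prod.ext_iff]
    right_inv := fun p => by simp [Prod.ext_iff]; ring
    continuous_toFun := by fun_prop
    continuous_invFun := by fun_prop }

noncomputable def psiH : ℝ × ℝ ≃ₜ ℝ × ℝ :=
  { toFun := fun p => (p.1, -p.1 - p.2)
    invFun := fun p => (p.1, -p.1 - p.2)
    left_inv := fun p => by simp [Prod.ext_iff]
    right_inv := fun p => by simp [Prod.ext_iff]
    continuous_toFun := by fun_prop
    continuous_invFun := by fun_prop }

lemma psi_mp : MeasurePreserving (fun p : ℝ × ℝ => (p.1, -p.1 - p.2))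
    ((volume : Measure ℝ).prod (volume : Measure ℝ)) ((volume : Measure ℝ).prod (volume : Measure ℝ)) := by
  have h1 := measurePreserving_prod_add (volume : Measure ℝ) (volume : Measure ℝ)
  have h2 : MeasurePreserving (fun q : ℝ × ℝ => (q.1, -q.2))
      ((volume : Measure ℝ).prod (volume : Measure ℝ)) ((volume : Measure ℝ).prod (volume : Measure ℝ)) :=
    (MeasurePreserving.id volume).prod (Measure.measurePreserving_neg volume)
  have := h2.comp h1
  convert this using 1
  funext p
  simp [Function.comp]
  ring

lemma prod_smul_right (c : ℝ≥0) :
    (volume : Measure ℝ).prod ((c : ℝ≥0∞) • (volume : Measure ℝ))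
      = (c : ℝ≥0∞) • ((volume : Measure ℝ).prod (volume : Measure ℝ)) := by
  have hc : ((c : ℝ≥0∞) • (volume : Measure ℝ)) = c • (volume : Measure ℝ) := by
    ext s hs
    simp only [Measure.smul_apply, ENNReal.smul_def, smul_eq_mul]
  rw [hc]
  haveI : SigmaFinite (c • (volume : Measure ℝ)) := by infer_instance
  refine Measure.prod_eq fun s t hs ht => ?_
  simp only [Measure.smul_apply, Measure.prod_prod, ENNReal.smul_def, smul_eq_mul]
  ring

lemma phi_map : Measure.map (fun p : ℝ × ℝ => (p.1, p.1 + 2 * p.2))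
    ((volume : Measure ℝ).prod (volume : Measure ℝ))
      = ((2⁻¹ : ℝ≥0) : ℝ≥0∞) • ((volume : Measure ℝ).prod (volume : Measure ℝ)) := by
  have hsm : Measure.map (fun t : ℝ => 2 * t) volume = ((2⁻¹ : ℝ≥0) : ℝ≥0∞) • volume := by
    rw [Real.map_volume_mul_left (two_ne_zero)]
    congr 1
    rw [show |(2:ℝ)⁻¹| = 2⁻¹ by norm_num]
    simp [ENNReal.ofReal_inv_of_pos]
  have hcomp : (fun p : ℝ × ℝ => (p.1, p.1 + 2 * p.2))
      = (fun q : ℝ × ℝ => (q.1, q.1 + q.2)) ∘ (Prod.map (id : ℝ → ℝ) (fun t => 2 * t)) := by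
    funext p; simp [Prod.map]
  rw [hcomp, ← Measure.map_map (by fun_prop) (by fun_prop),
    ← Measure.map_prod_map _ _ measurable_id (by fun_prop), Measure.map_id, hsm,
    prod_smul_right, Measure.map_smul,
    (measurePreserving_prod_add (volume : Measure ℝ) volume).map_eq]


/-- Let `v ∈ L²(ℝ)`, `h ∈ L¹ ∩ L^∞`, and `M` the operator
`(Mx)(s) = ∫ v(s) h(t) v(-s-t) x(s+2t) dt` on `L²(ℝ)`. Then `M` is the integral
(Hilbert–Schmidt) operator with kernel `k(s,u) = (1/2) v(s) h((u-s)/2) v((-s-u)/2)`, and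
`‖M‖₂² = (1/2)∫∫ |v(s)h(t)v(-s-t)|² ds dt ≤ (1/2)‖h‖_∞² ‖v‖₂⁴`. -/
theorem stmt14 (v h : ℝ → ℂ)
    (hv : MemLp v 2 volume) (hh1 : Integrable h volume) (hhinf : MemLp h ⊤ volume) :
    (∀ (x : ℝ → ℂ) (s : ℝ),
        (∫ t : ℝ, v s * h t * v (-s - t) * x (s + 2 * t)) =
          ∫ u : ℝ, ((1 / 2 : ℂ) * v s * h ((u - s) / 2) * v ((-s - u) / 2)) * x u) ∧
      Integrable
        (fun p : ℝ × ℝ =>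
          ‖(1 / 2 : ℂ) * v p.1 * h ((p.2 - p.1) / 2) * v ((-p.1 - p.2) / 2)‖ ^ 2) volume ∧
      (∫ p : ℝ × ℝ,
          ‖(1 / 2 : ℂ) * v p.1 * h ((p.2 - p.1) / 2) * v ((-p.1 - p.2) / 2)‖ ^ 2) =
        (1 / 2) * ∫ q : ℝ × ℝ, ‖v q.1 * h q.2 * v (-q.1 - q.2)‖ ^ 2 ∧
      (1 / 2) * (∫ q : ℝ × ℝ, ‖v q.1 * h q.2 * v (-q.1 - q.2)‖ ^ 2) ≤
        (1 / 2) * (eLpNorm h ⊤ volume).toReal ^ 2 * (∫ t : ℝ, ‖v t‖ ^ 2) ^ 2 := by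
  classical
  -- Part 1
  have part1 : ∀ (x : ℝ → ℂ) (s : ℝ),
      (∫ t : ℝ, v s * h t * v (-s - t) * x (s + 2 * t)) =
        ∫ u : ℝ, ((1 / 2 : ℂ) * v s * h ((u - s) / 2) * v ((-s - u) / 2)) * x u := by
    intro x s
    have harg : (fun t : ℝ => v s * h t * v (-s - t) * x (s + 2 * t))
        = fun t : ℝ => (fun u => v s * h ((u - s) / 2) * v ((-s - u) / 2) * x u) (s + 2 * t) := by
      funext t
      have e1 : ((s + 2 * t) - s) / 2 = t := by ring
      have e2 : (-s - (s + 2 * t)) / 2 = -s - t := by ring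
      simp only [e1, e2]
    have hrhs : (fun u : ℝ => ((1 / 2 : ℂ) * v s * h ((u - s) / 2) * v ((-s - u) / 2)) * x u)
        = fun u : ℝ => (1 / 2 : ℂ) * (v s * h ((u - s) / 2) * v ((-s - u) / 2) * x u) := by
      funext u; ring
    calc (∫ t : ℝ, v s * h t * v (-s - t) * x (s + 2 * t))
        = ∫ t : ℝ, (fun u => v s * h ((u - s) / 2) * v ((-s - u) / 2) * x u) (s + 2 * t) := by
          rw [harg]
      _ = (2⁻¹ : ℝ) • ∫ u : ℝ, v s * h ((u - s) / 2) * v ((-s - u) / 2) * x u :=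
          int_cov (fun u => v s * h ((u - s) / 2) * v ((-s - u) / 2) * x u) s
      _ = ∫ u : ℝ, ((1 / 2 : ℂ) * v s * h ((u - s) / 2) * v ((-s - u) / 2)) * x u := by
          rw [hrhs, integral_const_mul, Complex.real_smul]
          norm_num
  set C := (eLpNorm h ⊤ volume).toReal with hCdef
  set f : ℝ → ℝ := fun s => ‖v s‖ ^ 2 with hfdef
  set G : ℝ × ℝ → ℝ := fun q : ℝ × ℝ => ‖v q.1 * h q.2 * v (-q.1 - q.2)‖ ^ 2 with hGdef
  set K : ℝ × ℝ → ℝ :=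
    fun p : ℝ × ℝ => ‖(1 / 2 : ℂ) * v p.1 * h ((p.2 - p.1) / 2) * v ((-p.1 - p.2) / 2)‖ ^ 2
    with hKdef
  set π := (volume : Measure ℝ).prod (volume : Measure ℝ) with hπ
  have hvol : (volume : Measure (ℝ × ℝ)) = π := by
    rw [hπ]; exact Measure.volume_eq_prod ℝ ℝ
  -- integrability of f
  have hf : Integrable f volume := by
    have h1 := hv.integrable_norm_rpow two_ne_zero ENNReal.ofNat_ne_top
    refine h1.congr (Filter.Eventually.of_forall fun t => ?_)
    simp [hfdef]
  have hC0 : (0 : ℝ) ≤ C := ENNReal.toReal_nonneg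
  -- a.e. bound on h
  have haeh : ∀ᵐ t ∂(volume : Measure ℝ), ‖h t‖ ≤ C := by
    filter_upwards [ae_le_eLpNormEssSup (f := h) (μ := (volume : Measure ℝ))] with t ht
    have h2 : eLpNorm h ⊤ (volume : Measure ℝ) = eLpNormEssSup h volume :=
      eLpNorm_exponent_top
    calc ‖h t‖ = ((‖h t‖₊ : ℝ≥0∞)).toReal := by simp
      _ ≤ C := by
          rw [hCdef, h2]
          exact ENNReal.toReal_mono (by rw [← h2]; exact hhinf.2.ne) ht
  -- measurability infrastructure
  have ψemb : MeasurableEmbedding (fun p : ℝ × ℝ => (p.1, -p.1 - p.2)) :=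
    psiH.toMeasurableEquiv.measurableEmbedding
  have φemb : MeasurableEmbedding (fun p : ℝ × ℝ => (p.1, p.1 + 2 * p.2)) :=
    phiH.toMeasurableEquiv.measurableEmbedding
  have hmv := hv.aestronglyMeasurable
  have hmh := hh1.aestronglyMeasurable
  have qf : Measure.QuasiMeasurePreserving (Prod.fst : ℝ × ℝ → ℝ) π volume :=
    Measure.quasiMeasurePreserving_fst
  have qs : Measure.QuasiMeasurePreserving (Prod.snd : ℝ × ℝ → ℝ) π volume :=
    Measure.quasiMeasurePreserving_snd
  have qneg : Measure.QuasiMeasurePreserving (fun p : ℝ × ℝ => -p.1 - p.2) π volume :=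
    qs.comp psi_mp.quasiMeasurePreserving
  have asmG0 : AEStronglyMeasurable (fun q : ℝ × ℝ => v q.1 * h q.2 * v (-q.1 - q.2)) π :=
    ((hmv.comp_quasiMeasurePreserving qf).mul (hmh.comp_quasiMeasurePreserving qs)).mul
      (hmv.comp_quasiMeasurePreserving qneg)
  have asmG : AEStronglyMeasurable G π := by
    have h1 := asmG0.norm
    exact (h1.mul h1).congr (Filter.Eventually.of_forall fun q => by
      simp [hGdef, pow_two])
  -- pointwise bound
  have hbd : ∀ᵐ q ∂π, G q ≤ C ^ 2 * (f q.1 * f (-q.1 - q.2)) := by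
    filter_upwards [qs.ae haeh] with q hq
    have h2 : ‖h q.2‖ ^ 2 ≤ C ^ 2 := by
      have := norm_nonneg (h q.2); nlinarith
    have hGq : G q = ‖h q.2‖ ^ 2 * (‖v q.1‖ ^ 2 * ‖v (-q.1 - q.2)‖ ^ 2) := by
      simp only [hGdef, norm_mul, mul_pow]; ring
    have hfq : C ^ 2 * (f q.1 * f (-q.1 - q.2))
        = C ^ 2 * (‖v q.1‖ ^ 2 * ‖v (-q.1 - q.2)‖ ^ 2) := by simp only [hfdef]
    rw [hGq, hfq]
    exact mul_le_mul_of_nonneg_right h2 (by positivity)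
  -- majorant integrable
  have hDint : Integrable (fun q : ℝ × ℝ => C ^ 2 * (f q.1 * f (-q.1 - q.2))) π := by
    have h1 : Integrable (fun q : ℝ × ℝ => f q.1 * f q.2) π := hf.mul_prod hf
    have h2 : Integrable ((fun q : ℝ × ℝ => f q.1 * f q.2)
        ∘ (fun p : ℝ × ℝ => (p.1, -p.1 - p.2))) π :=
      (psi_mp.integrable_comp_emb ψemb).2 h1
    exact (h2 : Integrable (fun p : ℝ × ℝ => f p.1 * f (-p.1 - p.2)) π).const_mul _
  have hGint : Integrable G π := by
    refine hDint.mono' asmG ?_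
    filter_upwards [hbd] with q hq
    rwa [Real.norm_of_nonneg (by simp only [hGdef]; positivity)]
  -- integral bound
  have hint_le : (∫ q, G q ∂π) ≤ C ^ 2 * (∫ t, f t) ^ 2 := by
    have h1 : (∫ q, G q ∂π) ≤ ∫ q : ℝ × ℝ, C ^ 2 * (f q.1 * f (-q.1 - q.2)) ∂π :=
      integral_mono_ae hGint hDint hbd
    have h2 : (∫ q : ℝ × ℝ, f q.1 * f q.2 ∂π) = (∫ t, f t) * (∫ t, f t) :=
      integral_prod_mul f f
    have h3 : (∫ q : ℝ × ℝ, f q.1 * f (-q.1 - q.2) ∂π) = (∫ t, f t) * (∫ t, f t) := by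
      rw [← h2]
      exact psi_mp.integral_comp ψemb (fun q : ℝ × ℝ => f q.1 * f q.2)
    calc (∫ q, G q ∂π) ≤ _ := h1
      _ = C ^ 2 * ((∫ t, f t) * (∫ t, f t)) := by rw [integral_const_mul, h3]
      _ = C ^ 2 * (∫ t, f t) ^ 2 := by ring
  -- kernel vs G
  have hKphi : ∀ p : ℝ × ℝ, K (p.1, p.1 + 2 * p.2) = 4⁻¹ * G p := by
    intro p
    have e1 : ((p.1 + 2 * p.2) - p.1) / 2 = p.2 := by ring
    have e2 : (-p.1 - (p.1 + 2 * p.2)) / 2 = -p.1 - p.2 := by ring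
    simp only [hKdef, hGdef, e1, e2]
    rw [show (1/2 : ℂ) * v p.1 * h p.2 * v (-p.1 - p.2)
        = (1/2 : ℂ) * (v p.1 * h p.2 * v (-p.1 - p.2)) by ring, norm_mul, mul_pow]
    norm_num
  have hmapphi : Measure.map (fun p : ℝ × ℝ => (p.1, p.1 + 2 * p.2)) π
      = ((2⁻¹ : ℝ≥0) : ℝ≥0∞) • π := phi_map
  have hKcomp : (K ∘ fun p : ℝ × ℝ => (p.1, p.1 + 2 * p.2)) = fun p => 4⁻¹ * G p := by
    funext p; exact hKphi p
  have hKint : Integrable K π := by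
    have h1 : Integrable (K ∘ fun p : ℝ × ℝ => (p.1, p.1 + 2 * p.2)) π := by
      rw [hKcomp]; exact hGint.const_mul _
    have h2 := (φemb.integrable_map_iff).2 h1
    rw [hmapphi] at h2
    exact (integrable_smul_measure (by simp) (by simp)).1 h2
  have hKeq : (∫ p, K p ∂π) = (1 / 2) * ∫ q, G q ∂π := by
    have h1 : (∫ p, K p ∂(Measure.map (fun p : ℝ × ℝ => (p.1, p.1 + 2 * p.2)) π))
        = ∫ p : ℝ × ℝ, K (p.1, p.1 + 2 * p.2) ∂π := φemb.integral_map K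
    rw [hmapphi, integral_smul_measure] at h1
    have h2 : (∫ p : ℝ × ℝ, K (p.1, p.1 + 2 * p.2) ∂π) = 4⁻¹ * ∫ q, G q ∂π := by
      simp_rw [hKphi]
      rw [integral_const_mul]
    have hc : (((2⁻¹ : ℝ≥0) : ℝ≥0∞)).toReal = 2⁻¹ := by simp
    rw [hc, h2, smul_eq_mul] at h1
    linarith
  refine ⟨part1, ?_, ?_, ?_⟩
  · rw [hvol]; exact hKint
  · rw [hvol]; exact hKeq
  · rw [hvol]
    nlinarith [hint_le, sq_nonneg (∫ t, f t)]
end
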